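/- For every Orlicz function Φ, the lower index admits the following characterization: p_Φ = sup{ p > 0 : there exists C > 0 such that ∫₀^t s^{−p} Φ(s) ds/s ≤ C t^{−p} Φ(t) for all t > 0 }, where the supremum is a value in [1,∞]. -/

import Mathlib

open MeasureTheory Filter Set
open scoped ENNReal Topology

/-- An Orlicz function: continuous, nondecreasing and convex on `[0,∞)`,
vanishing at `0` and tending to `∞` at `∞`. -/
structure IsOrliczFunction (Φ : ℝ → ℝ) : Prop where
  continuousOn : ContinuousOn Φ (Set.Ici 0)
  monotoneOn : MonotoneOn Φ (Set.Ici 0)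
  convexOn : ConvexOn ℝ (Set.Ici 0) Φ
  map_zero : Φ 0 = 0
  tendsto_atTop : Tendsto Φ atTop atTop

/-- `M(t, Φ) = sup {Φ(ts)/Φ(s) : s > 0, Φ(s) > 0}`, as a value in `(0, ∞]`. -/
noncomputable def orliczM (Φ : ℝ → ℝ) (t : ℝ) : ℝ≥0∞ :=
  ⨆ s ∈ {s : ℝ | 0 < s ∧ 0 < Φ s}, ENNReal.ofReal (Φ (t * s) / Φ s)

/-- The quantity `log M(t, Φ) / log t`, as an extended real number.
The index `p_Φ` is its limit as `t → 0⁺`, and `q_Φ` is its limit as `t → ∞`. -/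
noncomputable def orliczLogRatio (Φ : ℝ → ℝ) (t : ℝ) : EReal :=
  ENNReal.log (orliczM Φ t) * ((Real.log t)⁻¹ : ℝ)

namespace OrliczAux

variable {Φ : ℝ → ℝ}

lemma Onneg (hΦ : IsOrliczFunction Φ) {s : ℝ} (hs : 0 ≤ s) : 0 ≤ Φ s := by
  have := hΦ.monotoneOn (le_refl (0:ℝ)) hs hs
  rwa [hΦ.map_zero] at this

lemma Omono (hΦ : IsOrliczFunction Φ) {a b : ℝ} (ha : 0 ≤ a) (hab : a ≤ b) : Φ a ≤ Φ b :=
  hΦ.monotoneOn ha (ha.trans hab) hab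

lemma scale (hΦ : IsOrliczFunction Φ) {t s : ℝ} (ht0 : 0 ≤ t) (ht1 : t ≤ 1) (hs : 0 ≤ s) :
    Φ (t * s) ≤ t * Φ s := by
  have h := hΦ.convexOn.2 (mem_Ici.mpr hs) (mem_Ici.mpr (le_refl (0:ℝ)))
    ht0 (by linarith : (0:ℝ) ≤ 1 - t) (by ring)
  simpa [hΦ.map_zero] using h

lemma orliczM_le_ofReal {ε g : ℝ}
    (h : ∀ s : ℝ, 0 < s → 0 < Φ s → Φ (ε * s) ≤ g * Φ s) :
    orliczM Φ ε ≤ ENNReal.ofReal g := by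
  refine iSup₂_le fun s hs => ?_
  obtain ⟨hs0, hsΦ⟩ := hs
  exact ENNReal.ofReal_le_ofReal ((div_le_iff₀ hsΦ).mpr (h s hs0 hsΦ))

lemma orliczM_le_self (hΦ : IsOrliczFunction Φ) {ε : ℝ} (h0 : 0 ≤ ε) (h1 : ε ≤ 1) :
    orliczM Φ ε ≤ ENNReal.ofReal ε :=
  orliczM_le_ofReal fun s hs0 _ => scale hΦ h0 h1 hs0.le

lemma my_integral_rpow (a b r : ℝ) (ha : 0 < a) (hab : a ≤ b) (hr : r ≠ -1) :
    ∫ x in a..b, x ^ r = (b ^ (r+1) - a ^ (r+1)) / (r+1) := by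
  rw [integral_rpow]
  right
  refine ⟨hr, fun h => ?_⟩
  have hb : 0 < b := ha.trans_le hab
  rcases Set.mem_uIcc.mp h with h | h <;> linarith [h.1, h.2]

lemma lintegral_rpow_Ioc (a b r : ℝ) (ha : 0 < a) (hab : a ≤ b) (hr : r ≠ -1) :
    ∫⁻ u in Set.Ioc a b, ENNReal.ofReal (u ^ r)
      = ENNReal.ofReal ((b ^ (r+1) - a ^ (r+1)) / (r+1)) := by
  have hcont : ContinuousOn (fun u : ℝ => u ^ r) (Set.Icc a b) := by
    apply ContinuousOn.rpow_const continuousOn_id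
    intro x hx
    exact Or.inl (ne_of_gt (lt_of_lt_of_le ha hx.1))
  have hint : IntegrableOn (fun u : ℝ => u ^ r) (Set.Ioc a b) :=
    (hcont.integrableOn_compact isCompact_Icc).mono_set Set.Ioc_subset_Icc_self
  rw [← MeasureTheory.ofReal_integral_eq_lintegral_ofReal hint ?_]
  · congr 1
    rw [← intervalIntegral.integral_of_le hab, my_integral_rpow a b r ha hab hr]
  · filter_upwards [ae_restrict_mem measurableSet_Ioc] with u hu
    have : 0 < u := lt_of_lt_of_le ha hu.1.le
    positivity

/-- Direction "membership implies pointwise bound on `M(ε)`". -/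
lemma lemA (hΦ : IsOrliczFunction Φ) {p C : ℝ} (hp : 0 < p) (hC : 0 < C)
    (hint : ∀ t : ℝ, 0 < t → (∫⁻ s in Set.Ioc (0:ℝ) t, ENNReal.ofReal (s ^ (-p) * Φ s / s))
      ≤ ENNReal.ofReal (C * (t ^ (-p) * Φ t)))
    {ε : ℝ} (hε0 : 0 < ε) (hε1 : ε < 1)
    {s : ℝ} (hs0 : 0 < s) (hsΦ : 0 < Φ s) :
    Φ (ε * s) ≤ (C * p / (ε ^ (-p) - 1)) * Φ s := by
  set a := ε * s with ha
  have ha0 : 0 < a := by positivity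
  have has : a ≤ s := by nlinarith
  have haΦ : 0 ≤ Φ a := Onneg hΦ ha0.le
  have key : ENNReal.ofReal (Φ a * ((a ^ (-p) - s ^ (-p)) / p)) ≤
      ENNReal.ofReal (C * (s ^ (-p) * Φ s)) := by
    have hr : (-p - 1 : ℝ) ≠ -1 := by linarith
    calc ENNReal.ofReal (Φ a * ((a ^ (-p) - s ^ (-p)) / p))
        = ENNReal.ofReal (Φ a) * ENNReal.ofReal ((s ^ (-p-1+1) - a ^ (-p-1+1)) / (-p-1+1)) := by
          rw [← ENNReal.ofReal_mul haΦ]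
          congr 2
          rw [show (-p-1+1 : ℝ) = -p by ring]
          rw [div_eq_div_iff hp.ne' (by linarith : (-p:ℝ) ≠ 0)]
          ring
      _ = ENNReal.ofReal (Φ a) * ∫⁻ u in Set.Ioc a s, ENNReal.ofReal (u ^ (-p-1)) := by
          rw [lintegral_rpow_Ioc a s (-p-1) ha0 has hr]
      _ = ∫⁻ u in Set.Ioc a s, ENNReal.ofReal (Φ a) * ENNReal.ofReal (u ^ (-p-1)) := by
          rw [lintegral_const_mul' _ _ ENNReal.ofReal_ne_top]
      _ ≤ ∫⁻ u in Set.Ioc a s, ENNReal.ofReal (u ^ (-p) * Φ u / u) := by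
          refine setLIntegral_mono' measurableSet_Ioc fun u hu => ?_
          have hu0 : 0 < u := ha0.trans hu.1
          rw [← ENNReal.ofReal_mul haΦ]
          apply ENNReal.ofReal_le_ofReal
          have h1 : Φ a ≤ Φ u := Omono hΦ ha0.le hu.1.le
          have h2 : u ^ (-p-1 : ℝ) = u ^ (-p : ℝ) * u⁻¹ := by
            rw [show (-p-1:ℝ) = -p + (-1) by ring, Real.rpow_add hu0, Real.rpow_neg_one]
          rw [h2, div_eq_mul_inv]
          have h3 : (0:ℝ) ≤ u ^ (-p:ℝ) * u⁻¹ := by positivity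
          nlinarith [Real.rpow_nonneg hu0.le (-p)]
      _ ≤ ∫⁻ u in Set.Ioc 0 s, ENNReal.ofReal (u ^ (-p) * Φ u / u) := by
          apply lintegral_mono_set
          exact Set.Ioc_subset_Ioc_left ha0.le
      _ ≤ ENNReal.ofReal (C * (s ^ (-p) * Φ s)) := hint s hs0
  have hB : (0:ℝ) ≤ C * (s ^ (-p) * Φ s) := by positivity
  have key' : Φ a * ((a ^ (-p) - s ^ (-p)) / p) ≤ C * (s ^ (-p) * Φ s) :=
    (ENNReal.ofReal_le_ofReal_iff hB).mp key
  have hX : (0:ℝ) < s ^ (-p) := Real.rpow_pos_of_pos hs0 _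
  have hE : 1 < ε ^ (-p : ℝ) := by
    rw [Real.one_lt_rpow_iff_of_pos hε0]
    exact Or.inr ⟨hε1, by linarith⟩
  have hEs : a ^ (-p:ℝ) = ε ^ (-p:ℝ) * s ^ (-p:ℝ) := Real.mul_rpow hε0.le hs0.le
  rw [div_mul_eq_mul_div, le_div_iff₀ (by linarith : (0:ℝ) < ε ^ (-p:ℝ) - 1)]
  rw [hEs] at key'
  have h4 := mul_le_mul_of_nonneg_right key' hp.le
  have h5 : Φ a * ((ε ^ (-p:ℝ) * s ^ (-p:ℝ) - s ^ (-p:ℝ)) / p) * p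
      = Φ a * (ε ^ (-p:ℝ) * s ^ (-p:ℝ) - s ^ (-p:ℝ)) := by
    field_simp
  rw [h5] at h4
  nlinarith

/-- Direction "geometric bound on `Φ` implies membership". -/
lemma lemB (hΦ : IsOrliczFunction Φ) {p t₀ m : ℝ} (hp : 0 < p)
    (ht0 : 0 < t₀) (ht1 : t₀ < 1) (hm : 0 ≤ m) (hmlt : m < t₀ ^ (p:ℝ))
    (hsub : ∀ s : ℝ, 0 < s → Φ (t₀ * s) ≤ m * Φ s) :
    ∃ C : ℝ, 0 < C ∧ ∀ t : ℝ, 0 < t →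
      (∫⁻ s in Set.Ioc (0 : ℝ) t, ENNReal.ofReal (s ^ (-p) * Φ s / s))
        ≤ ENNReal.ofReal (C * (t ^ (-p) * Φ t)) := by
  set r : ℝ := m * t₀ ^ (-p : ℝ) with hr
  have htp : (0:ℝ) < t₀ ^ (p:ℝ) := Real.rpow_pos_of_pos ht0 _
  have htnp : (0:ℝ) < t₀ ^ (-p:ℝ) := Real.rpow_pos_of_pos ht0 _
  have hr0 : 0 ≤ r := by positivity
  have hr1 : r < 1 := by
    rw [hr]
    calc m * t₀ ^ (-p:ℝ) < t₀ ^ (p:ℝ) * t₀ ^ (-p:ℝ) := by nlinarith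
      _ = 1 := by rw [← Real.rpow_add ht0]; simp
  set K : ℝ := (1 - t₀) * t₀ ^ (-p-1 : ℝ) with hK
  have hK0 : 0 < K := by
    have := Real.rpow_pos_of_pos ht0 (-p-1)
    nlinarith
  refine ⟨K / (1 - r), div_pos hK0 (by linarith), fun t ht => ?_⟩
  have hΦt : 0 ≤ Φ t := Onneg hΦ ht.le
  have hiter : ∀ n : ℕ, ∀ s : ℝ, 0 < s → Φ (t₀ ^ n * s) ≤ m ^ n * Φ s := by
    intro n
    induction n with
    | zero => intro s hs; simp
    | succ k ih =>
      intro s hs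
      have h1 : Φ (t₀ ^ k * (t₀ * s)) ≤ m ^ k * Φ (t₀ * s) := ih _ (by positivity)
      have h2 : Φ (t₀ * s) ≤ m * Φ s := hsub s hs
      calc Φ (t₀ ^ (k+1) * s) = Φ (t₀ ^ k * (t₀ * s)) := by ring_nf
        _ ≤ m ^ k * Φ (t₀ * s) := h1
        _ ≤ m ^ k * (m * Φ s) := by
            apply mul_le_mul_of_nonneg_left h2 (by positivity)
        _ = m ^ (k+1) * Φ s := by ring
  have hcover : Set.Ioc (0:ℝ) t ⊆ ⋃ n : ℕ, Set.Ioc (t₀ ^ (n+1) * t) (t₀ ^ n * t) := by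
    intro x hx
    obtain ⟨hx0, hxt⟩ := hx
    have htend : Tendsto (fun n : ℕ => t₀ ^ (n+1) * t) atTop (𝓝 0) := by
      have h := tendsto_pow_atTop_nhds_zero_of_lt_one ht0.le ht1
      have h2 := (h.comp (tendsto_add_atTop_nat 1)).mul_const t
      simpa using h2
    have hex : ∃ n : ℕ, t₀ ^ (n+1) * t < x := by
      rcases ((htend.eventually (eventually_lt_nhds hx0)).exists) with ⟨n, hn⟩
      exact ⟨n, hn⟩
    classical
    let n := Nat.find hex
    have hn : t₀ ^ (n+1) * t < x := Nat.find_spec hex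
    refine Set.mem_iUnion.mpr ⟨n, hn, ?_⟩
    rcases Nat.eq_zero_or_pos n with h0 | h0
    · rw [h0]; simpa using hxt
    · have := Nat.find_min hex (Nat.sub_lt h0 one_pos)
      push_neg at this
      have hn1 : n - 1 + 1 = n := Nat.succ_pred_eq_of_pos h0
      rwa [hn1] at this
  calc (∫⁻ s in Set.Ioc (0 : ℝ) t, ENNReal.ofReal (s ^ (-p) * Φ s / s))
      ≤ ∫⁻ s in ⋃ n : ℕ, Set.Ioc (t₀ ^ (n+1) * t) (t₀ ^ n * t),
          ENNReal.ofReal (s ^ (-p) * Φ s / s) := lintegral_mono_set hcover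
    _ ≤ ∑' n : ℕ, ∫⁻ s in Set.Ioc (t₀ ^ (n+1) * t) (t₀ ^ n * t),
          ENNReal.ofReal (s ^ (-p) * Φ s / s) := lintegral_iUnion_le _ _
    _ ≤ ∑' n : ℕ, ENNReal.ofReal ((Φ t * (t ^ (-p:ℝ) * K)) * r ^ n) := by
        apply ENNReal.tsum_le_tsum
        intro n
        set a : ℝ := t₀ ^ (n+1) * t with hadef
        set b : ℝ := t₀ ^ n * t with hbdef
        have ha0 : 0 < a := by positivity
        have hb0 : 0 < b := by positivity
        have hab : a ≤ b := by
          rw [hadef, hbdef, pow_succ]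
          nlinarith [pow_pos ht0 n]
        have hΦb : Φ b ≤ m ^ n * Φ t := by
          have := hiter n t ht
          simpa [hbdef] using this
        have hbound : ∀ u ∈ Set.Ioc a b,
            ENNReal.ofReal (u ^ (-p) * Φ u / u)
              ≤ ENNReal.ofReal (m ^ n * Φ t * a ^ (-p-1:ℝ)) := by
          intro u hu
          have hu0 : 0 < u := ha0.trans hu.1
          apply ENNReal.ofReal_le_ofReal
          have h1 : Φ u ≤ m ^ n * Φ t := le_trans (Omono hΦ hu0.le hu.2) hΦb
          have h2 : u ^ (-p:ℝ) * Φ u / u = Φ u * u ^ (-p-1:ℝ) := by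
            rw [show (-p-1:ℝ) = -p + (-1) by ring, Real.rpow_add hu0, Real.rpow_neg_one]
            field_simp
          have h3 : u ^ (-p-1:ℝ) ≤ a ^ (-p-1:ℝ) :=
            Real.rpow_le_rpow_of_nonpos ha0 hu.1.le (by linarith)
          have h4 : 0 ≤ Φ u := Onneg hΦ hu0.le
          have h5 : 0 ≤ u ^ (-p-1:ℝ) := Real.rpow_nonneg hu0.le _
          have h6 : 0 ≤ a ^ (-p-1:ℝ) := Real.rpow_nonneg ha0.le _
          rw [h2]
          nlinarith
        calc (∫⁻ u in Set.Ioc a b, ENNReal.ofReal (u ^ (-p) * Φ u / u))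
            ≤ ∫⁻ _ in Set.Ioc a b, ENNReal.ofReal (m ^ n * Φ t * a ^ (-p-1:ℝ)) :=
              setLIntegral_mono' measurableSet_Ioc hbound
          _ = ENNReal.ofReal (m ^ n * Φ t * a ^ (-p-1:ℝ)) * volume (Set.Ioc a b) :=
              setLIntegral_const _ _
          _ = ENNReal.ofReal (m ^ n * Φ t * a ^ (-p-1:ℝ)) * ENNReal.ofReal (b - a) := by
              rw [Real.volume_Ioc]
          _ = ENNReal.ofReal (m ^ n * Φ t * a ^ (-p-1:ℝ) * (b - a)) := by
              rw [← ENNReal.ofReal_mul (by positivity)]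
          _ = ENNReal.ofReal ((Φ t * (t ^ (-p:ℝ) * K)) * r ^ n) := by
              congr 1
              have hpow : ∀ k : ℕ, (t₀:ℝ) ^ k = t₀ ^ ((k:ℝ)) :=
                fun k => (Real.rpow_natCast t₀ k).symm
              have h1 : a ^ (-p-1:ℝ) = t₀ ^ (((n:ℝ)+1) * (-p-1)) * t ^ (-p-1:ℝ) := by
                rw [hadef, Real.mul_rpow (by positivity) ht.le, hpow (n+1),
                  ← Real.rpow_mul ht0.le]
                push_cast
                ring_nf
              have h2 : r ^ n = m ^ n * t₀ ^ ((-p) * (n:ℝ)) := by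
                rw [hr, mul_pow, ← Real.rpow_natCast (t₀ ^ (-p:ℝ)) n, ← Real.rpow_mul ht0.le]
              have h3 : t ^ (-p-1:ℝ) * t = t ^ (-p:ℝ) := by
                nth_rewrite 2 [← Real.rpow_one t]
                rw [← Real.rpow_add ht]
                ring_nf
              have h4 : b - a = t₀ ^ ((n:ℝ)) * (t * (1-t₀)) := by
                rw [hadef, hbdef, ← hpow n, pow_succ]
                ring
              have h5 : t₀ ^ (((n:ℝ)+1) * (-p-1)) * t₀ ^ ((n:ℝ))
                  = t₀ ^ (-p-1:ℝ) * t₀ ^ ((-p) * (n:ℝ)) := by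
                rw [← Real.rpow_add ht0, ← Real.rpow_add ht0]
                ring_nf
              rw [h1, h2, h4, hK]
              calc m ^ n * Φ t * (t₀ ^ (((n:ℝ)+1) * (-p-1)) * t ^ (-p-1:ℝ))
                    * (t₀ ^ ((n:ℝ)) * (t * (1-t₀)))
                  = Φ t * (1-t₀) * (t₀ ^ (((n:ℝ)+1) * (-p-1)) * t₀ ^ ((n:ℝ)))
                    * (t ^ (-p-1:ℝ) * t) * m ^ n := by ring
                _ = Φ t * (1-t₀) * (t₀ ^ (-p-1:ℝ) * t₀ ^ ((-p) * (n:ℝ)))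
                    * t ^ (-p:ℝ) * m ^ n := by rw [h5, h3]
                _ = Φ t * (t ^ (-p:ℝ) * ((1 - t₀) * t₀ ^ (-p-1:ℝ)))
                    * (m ^ n * t₀ ^ ((-p) * (n:ℝ))) := by ring
    _ ≤ ENNReal.ofReal (K / (1 - r) * (t ^ (-p) * Φ t)) := by
        have hD : (0:ℝ) ≤ Φ t * (t ^ (-p:ℝ) * K) := by positivity
        have heq : ∀ n : ℕ, ENNReal.ofReal ((Φ t * (t ^ (-p:ℝ) * K)) * r ^ n)
            = ENNReal.ofReal (Φ t * (t ^ (-p:ℝ) * K)) * ENNReal.ofReal r ^ n := by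
          intro n
          rw [ENNReal.ofReal_mul hD, ENNReal.ofReal_pow hr0]
        rw [tsum_congr heq, ENNReal.tsum_mul_left, ENNReal.tsum_geometric]
        have h1r : (1:ℝ≥0∞) - ENNReal.ofReal r = ENNReal.ofReal (1 - r) := by
          rw [ENNReal.ofReal_sub _ hr0, ENNReal.ofReal_one]
        rw [h1r, ← ENNReal.ofReal_inv_of_pos (by linarith), ← ENNReal.ofReal_mul hD]
        apply ENNReal.ofReal_le_ofReal
        rw [div_eq_mul_inv]
        ring_nf
        exact le_refl _

lemma flip_mul (c : ℝ) (hc : c < 0) (x y : EReal) (h : x ≤ y) : y * (c:EReal) ≤ x * (c:EReal) := by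
  have h1 : x * ((-c : ℝ) : EReal) ≤ y * ((-c : ℝ) : EReal) := by
    apply mul_le_mul_of_nonneg_right h
    exact_mod_cast (neg_nonneg.2 hc.le)
  have e : ∀ z : EReal, z * (c:EReal) = -(z * ((-c:ℝ):EReal)) := by
    intro z
    rw [show ((-c:ℝ):EReal) = -(c:EReal) by push_cast; ring_nf, mul_neg, neg_neg]
  rw [e x, e y]
  exact EReal.neg_le_neg_iff.2 h1

lemma ratio_ge {ε g : ℝ} (hε0 : 0 < ε) (hε1 : ε < 1) (hg : 0 < g)
    (h : orliczM Φ ε ≤ ENNReal.ofReal g) :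
    ((Real.log g * (Real.log ε)⁻¹ : ℝ) : EReal) ≤ orliczLogRatio Φ ε := by
  have hlog : Real.log ε < 0 := Real.log_neg hε0 hε1
  have h1 : ENNReal.log (orliczM Φ ε) ≤ ((Real.log g : ℝ) : EReal) := by
    rw [← ENNReal.log_ofReal_of_pos hg]
    exact ENNReal.log_monotone h
  have h2 := flip_mul ((Real.log ε)⁻¹) (inv_lt_zero.mpr hlog) _ _ h1
  calc ((Real.log g * (Real.log ε)⁻¹ : ℝ) : EReal)
      = ((Real.log g : ℝ) : EReal) * (((Real.log ε)⁻¹ : ℝ) : EReal) := by push_cast; rfl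
    _ ≤ ENNReal.log (orliczM Φ ε) * (((Real.log ε)⁻¹ : ℝ) : EReal) := h2
    _ = orliczLogRatio Φ ε := rfl

lemma ratio_le {ε q : ℝ} (hε0 : 0 < ε) (hε1 : ε < 1)
    (h : ENNReal.ofReal (ε ^ (q:ℝ)) ≤ orliczM Φ ε) :
    orliczLogRatio Φ ε ≤ ((q:ℝ) : EReal) := by
  have hlog : Real.log ε < 0 := Real.log_neg hε0 hε1
  have hq : (0:ℝ) < ε ^ (q:ℝ) := Real.rpow_pos_of_pos hε0 _
  have h1 : ((Real.log (ε ^ (q:ℝ)) : ℝ) : EReal) ≤ ENNReal.log (orliczM Φ ε) := by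
    rw [← ENNReal.log_ofReal_of_pos hq]
    exact ENNReal.log_monotone h
  have h2 := flip_mul ((Real.log ε)⁻¹) (inv_lt_zero.mpr hlog) _ _ h1
  calc orliczLogRatio Φ ε
      ≤ ((Real.log (ε ^ (q:ℝ)) : ℝ) : EReal) * (((Real.log ε)⁻¹ : ℝ) : EReal) := h2
    _ = ((Real.log (ε ^ (q:ℝ)) * (Real.log ε)⁻¹ : ℝ) : EReal) := by push_cast; rfl
    _ = ((q : ℝ) : EReal) := by
        rw [Real.log_rpow hε0, mul_assoc, mul_inv_cancel₀ hlog.ne, mul_one]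

lemma div_atBot_zero (f g : ℝ → ℝ) (l : Filter ℝ) (a : ℝ) (hf : Tendsto f l (𝓝 a))
    (hg : Tendsto g l atBot) : Tendsto (fun x => f x / g x) l (𝓝 0) := by
  have h0 : Tendsto (fun x => -g x) l atTop := tendsto_neg_atTop_iff.mpr hg
  have h1 : Tendsto (fun x => (-g x)⁻¹) l (𝓝 0) := h0.inv_tendsto_atTop
  have h2 : Tendsto (fun x => (g x)⁻¹) l (𝓝 0) := by
    have := h1.neg
    simpa [inv_neg] using this
  simpa [div_eq_mul_inv] using hf.mul h2

lemma tendsto_F {p C : ℝ} (hp : 0 < p) (hC : 0 < C) :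
    Tendsto (fun ε : ℝ => ((Real.log (C * p / (ε ^ (-p:ℝ) - 1)) * (Real.log ε)⁻¹ : ℝ) : EReal))
      (𝓝[>] (0:ℝ)) (𝓝 ((p:ℝ) : EReal)) := by
  have key : Tendsto (fun ε : ℝ => Real.log (C * p / (ε ^ (-p:ℝ) - 1)) * (Real.log ε)⁻¹)
      (𝓝[>] (0:ℝ)) (𝓝 p) := by
    have hrp : Tendsto (fun ε : ℝ => ε ^ (p:ℝ)) (𝓝[>] (0:ℝ)) (𝓝 0) := by
      have hc : ContinuousAt (fun ε : ℝ => ε ^ (p:ℝ)) 0 :=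
        Real.continuousAt_rpow_const 0 p (Or.inr hp.le)
      have := hc.tendsto.mono_left (nhdsWithin_le_nhds (s := Set.Ioi (0:ℝ)))
      rwa [Real.zero_rpow hp.ne'] at this
    have hnum : Tendsto (fun ε : ℝ => Real.log (C * p) - Real.log (1 - ε ^ (p:ℝ)))
        (𝓝[>] (0:ℝ)) (𝓝 (Real.log (C * p))) := by
      have h1 : Tendsto (fun ε : ℝ => 1 - ε ^ (p:ℝ)) (𝓝[>] (0:ℝ)) (𝓝 1) := by
        have := (tendsto_const_nhds (x := (1:ℝ))).sub hrp
        simpa using this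
      have h2 : Tendsto (fun ε : ℝ => Real.log (1 - ε ^ (p:ℝ))) (𝓝[>] (0:ℝ)) (𝓝 0) := by
        have := (Real.continuousAt_log one_ne_zero).tendsto.comp h1
        simpa [Real.log_one, Function.comp_def] using this
      simpa using (tendsto_const_nhds (x := Real.log (C*p))).sub h2
    have hmain : Tendsto (fun ε : ℝ =>
        (Real.log (C * p) - Real.log (1 - ε ^ (p:ℝ))) / Real.log ε + p) (𝓝[>] (0:ℝ)) (𝓝 p) := by
      have := (div_atBot_zero _ _ _ _ hnum Real.tendsto_log_nhdsGT_zero).add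
        (tendsto_const_nhds (x := p))
      simpa using this
    apply hmain.congr'
    filter_upwards [Ioo_mem_nhdsGT (zero_lt_one (α := ℝ))] with ε hε
    obtain ⟨hε0, hε1⟩ := hε
    have hεp : (0:ℝ) < ε ^ (p:ℝ) := Real.rpow_pos_of_pos hε0 _
    have hεp1 : ε ^ (p:ℝ) < 1 := Real.rpow_lt_one hε0.le hε1 hp
    have hlogε : Real.log ε ≠ 0 := (Real.log_neg hε0 hε1).ne
    have he : C * p / (ε ^ (-p:ℝ) - 1) = C * p * ε ^ (p:ℝ) / (1 - ε ^ (p:ℝ)) := by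
      rw [Real.rpow_neg hε0.le]
      field_simp
    rw [he, Real.log_div (by positivity) (by linarith),
      Real.log_mul (by positivity) hεp.ne', Real.log_rpow hε0]
    field_simp
    ring
  exact ((EReal.continuous_coe_iff.mpr continuous_id).continuousAt.tendsto.comp key :)

end OrliczAux

open OrliczAux in
/-- characterization of the lower index `p_Φ` of an Orlicz function:
`p_Φ = sup { p > 0 : ∃ C > 0, ∫₀ᵗ s^{-p} Φ(s) ds/s ≤ C t^{-p} Φ(t) for all t > 0 }`,
a value in `[1, ∞]`. -/
theorem orlicz_lower_index_characterization (Φ : ℝ → ℝ) (hΦ : IsOrliczFunction Φ)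
    (pΦ : EReal) (hpΦ : Tendsto (orliczLogRatio Φ) (𝓝[>] (0 : ℝ)) (𝓝 pΦ)) :
    pΦ = sSup ((fun p : ℝ => (p : EReal)) ''
        {p : ℝ | 0 < p ∧ ∃ C : ℝ, 0 < C ∧ ∀ t : ℝ, 0 < t →
          (∫⁻ s in Set.Ioc (0 : ℝ) t, ENNReal.ofReal (s ^ (-p) * Φ s / s))
            ≤ ENNReal.ofReal (C * (t ^ (-p) * Φ t))}) ∧
      1 ≤ pΦ := by
  set S : Set EReal := (fun p : ℝ => (p : EReal)) ''
      {p : ℝ | 0 < p ∧ ∃ C : ℝ, 0 < C ∧ ∀ t : ℝ, 0 < t →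
        (∫⁻ s in Set.Ioc (0 : ℝ) t, ENNReal.ofReal (s ^ (-p) * Φ s / s))
          ≤ ENNReal.ofReal (C * (t ^ (-p) * Φ t))} with hS
  have hIoo : Set.Ioo (0:ℝ) 1 ∈ 𝓝[>] (0:ℝ) :=
    Ioo_mem_nhdsGT (zero_lt_one (α := ℝ))
  have h1le : (1 : EReal) ≤ pΦ := by
    refine ge_of_tendsto hpΦ ?_
    filter_upwards [hIoo] with ε hε
    obtain ⟨hε0, hε1⟩ := hε
    have hM : orliczM Φ ε ≤ ENNReal.ofReal ε := orliczM_le_self hΦ hε0.le hε1.le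
    have h := ratio_ge hε0 hε1 hε0 hM
    have hlog : Real.log ε ≠ 0 := (Real.log_neg hε0 hε1).ne
    rw [mul_inv_cancel₀ hlog] at h
    exact_mod_cast h
  refine ⟨le_antisymm ?_ ?_, h1le⟩
  · -- pΦ ≤ sSup S
    by_contra hcon
    push_neg at hcon
    have h0 : (0:EReal) < pΦ := lt_of_lt_of_le (by norm_num) h1le
    have hmax : max (sSup S) 0 < pΦ := max_lt hcon h0
    obtain ⟨q, hq1, hq2⟩ := EReal.exists_between_coe_real hmax
    have hq0 : (0:ℝ) < q := by
      have : (0:EReal) < (q:EReal) := lt_of_le_of_lt (le_max_right _ _) hq1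
      exact_mod_cast this
    have hev : ∀ᶠ ε in 𝓝[>] (0:ℝ), ((q:ℝ):EReal) < orliczLogRatio Φ ε :=
      hpΦ.eventually (eventually_gt_nhds hq2)
    obtain ⟨t₀, hrt, ht01⟩ := (hev.and (eventually_mem_set.mpr hIoo)).exists
    obtain ⟨ht0, ht1⟩ := ht01
    have hMlt : orliczM Φ t₀ < ENNReal.ofReal (t₀ ^ (q:ℝ)) := by
      by_contra hM
      push_neg at hM
      exact absurd (ratio_le ht0 ht1 hM) (not_le.mpr hrt)
    set m := (orliczM Φ t₀).toReal with hmdef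
    have hMne : orliczM Φ t₀ ≠ ⊤ := (hMlt.trans_le le_top).ne
    have hMof : orliczM Φ t₀ = ENNReal.ofReal m := (ENNReal.ofReal_toReal hMne).symm
    have hm0 : 0 ≤ m := ENNReal.toReal_nonneg
    have hmlt : m < t₀ ^ (q:ℝ) := by
      rw [hMof] at hMlt
      exact (ENNReal.ofReal_lt_ofReal_iff_of_nonneg hm0).mp hMlt
    have hsub : ∀ s : ℝ, 0 < s → Φ (t₀ * s) ≤ m * Φ s := by
      intro s hs
      by_cases hsΦ : 0 < Φ s
      · have hle : ENNReal.ofReal (Φ (t₀ * s) / Φ s) ≤ orliczM Φ t₀ :=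
          le_iSup₂ (f := fun s (_ : s ∈ {s : ℝ | 0 < s ∧ 0 < Φ s}) =>
            ENNReal.ofReal (Φ (t₀ * s) / Φ s)) s ⟨hs, hsΦ⟩
        rw [hMof] at hle
        have := (ENNReal.ofReal_le_ofReal_iff hm0).mp hle
        exact (div_le_iff₀ hsΦ).mp this
      · have hΦs0 : Φ s = 0 :=
          le_antisymm (not_lt.mp hsΦ) (Onneg hΦ hs.le)
        have h1 : Φ (t₀ * s) ≤ Φ s := Omono hΦ (by positivity) (by nlinarith)
        have h2 : 0 ≤ Φ (t₀ * s) := Onneg hΦ (by positivity)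
        rw [hΦs0]
        nlinarith
    obtain ⟨C, hC, hint⟩ := lemB hΦ hq0 ht0 ht1 hm0 hmlt hsub
    have hqS : ((q:ℝ):EReal) ∈ S := ⟨q, ⟨hq0, C, hC, hint⟩, rfl⟩
    have hle := le_sSup hqS
    exact absurd (lt_of_le_of_lt (hle.trans (le_max_left _ _)) hq1) (lt_irrefl _)
  · -- sSup S ≤ pΦ
    apply sSup_le
    rintro x ⟨p, ⟨hp0, C, hC, hint⟩, rfl⟩
    refine le_of_tendsto_of_tendsto (tendsto_F hp0 hC) hpΦ ?_
    filter_upwards [hIoo] with ε hε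
    obtain ⟨hε0, hε1⟩ := hε
    have hE : 1 < ε ^ (-p : ℝ) := by
      rw [Real.one_lt_rpow_iff_of_pos hε0]
      exact Or.inr ⟨hε1, by linarith⟩
    have hg : 0 < C * p / (ε ^ (-p:ℝ) - 1) :=
      div_pos (by positivity) (by linarith)
    have hM : orliczM Φ ε ≤ ENNReal.ofReal (C * p / (ε ^ (-p:ℝ) - 1)) :=
      orliczM_le_ofReal fun s hs0 hsΦ => lemA hΦ hp0 hC hint hε0 hε1 hs0 hsΦ
    exact ratio_ge hε0 hε1 hg hM
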